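/- Fix 0 ≤ δ < 1 and B, C > 0 with B < B_c, where B_c = 1 + √(1 + 1/C). For each integer n ≥ 1 set p = ⌊n^δ⌋ and let Z^{(n)} = (z_{ij}) be the typical table of P(r̃, c̃) for the margins of M_{n,δ}(B,C). Then there exist a constant K > 0 and N ∈ ℕ such that for all n ≥ N: |z_{11} − B²(C+1)/((B_c − B)(B_c + B − 2))| ≤ K·n^{δ−1} and |z_{1,p+1} − BC| ≤ K·n^{δ−1}. -/

import Mathlib

/-- The transportation polytope `P(r, c)`. -/
def transportPolytope {m n : ℕ} (r : Fin m → ℝ) (c : Fin n → ℝ) :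
    Set (Fin m → Fin n → ℝ) :=
  {X | (∀ i j, 0 ≤ X i j) ∧ (∀ i, ∑ j, X i j = r i) ∧ (∀ j, ∑ i, X i j = c j)}

/-- The entropy-like functional `g`. -/
noncomputable def gFun {m n : ℕ} (X : Fin m → Fin n → ℝ) : ℝ :=
  ∑ i, ∑ j, ((X i j + 1) * Real.log (X i j + 1) - X i j * Real.log (X i j))

/-- The margin vector of `M_{n,δ}(B,C)`: first `p` entries equal `R`, last `n` equal `S`. -/
def margin (p n R S : ℕ) : Fin (p + n) → ℝ :=
  fun i => if (i : ℕ) < p then (R : ℝ) else (S : ℝ)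

/-- Subcritical regime `B < B_c = 1 + √(1 + 1/C)`: the entries `z_{11}` and `z_{1,p+1}` of
the typical table of `M_{n,δ}(B,C)` converge to `B²(C+1)/((B_c−B)(B_c+B−2))` and `BC`
respectively, with error `O(n^{δ−1})`. -/

noncomputable def g0 (x : ℝ) : ℝ := (x+1) * Real.log (x+1) - x * Real.log x
noncomputable def ell (x : ℝ) : ℝ := Real.log (x+1) - Real.log x

lemma ell_pos {x : ℝ} (hx : 0 < x) : 0 < ell x := by
  have := Real.log_lt_log hx (by linarith : x < x + 1)
  unfold ell; linarith

lemma g0_cont : Continuous g0 := by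
  unfold g0
  have h1 : Continuous fun x : ℝ => (x+1) * Real.log (x+1) :=
    (Real.continuous_mul_log).comp (continuous_id.add continuous_const)
  exact h1.sub Real.continuous_mul_log

lemma ell_contAt {x : ℝ} (hx : 0 < x) : ContinuousAt ell x := by
  unfold ell
  have h1 : ContinuousAt (fun y : ℝ => y + 1) x := by fun_prop
  exact ContinuousAt.sub (h1.log (by simp; linarith))
    (Real.continuousAt_log (ne_of_gt hx))

lemma hasDerivAt_g0 {x : ℝ} (hx : 0 < x) : HasDerivAt g0 (ell x) x := by
  have h1 : HasDerivAt (fun y : ℝ => y + 1) 1 x := (hasDerivAt_id x).add_const 1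
  have h2 : HasDerivAt (fun y : ℝ => (y+1) * Real.log (y+1))
      ((Real.log (x+1) + 1) * 1) x := by
    have := (Real.hasDerivAt_mul_log (by linarith : x + 1 ≠ 0)).comp x h1
    exact this
  have h3 : HasDerivAt (fun y : ℝ => y * Real.log y) (Real.log x + 1) x :=
    Real.hasDerivAt_mul_log (ne_of_gt hx)
  show HasDerivAt g0 (ell x) x
  unfold g0 ell
  exact (h2.sub h3).congr_deriv (by ring)

lemma log_sub_le {u v : ℝ} (hu : 0 < u) (huv : u ≤ v) :
    Real.log v - Real.log u ≤ (v - u) / u := by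
  have hv : 0 < v := lt_of_lt_of_le hu huv
  have h := Real.log_le_sub_one_of_pos (div_pos hv hu)
  rw [Real.log_div (ne_of_gt hv) (ne_of_gt hu)] at h
  have heq : v / u - 1 = (v - u) / u := by field_simp
  rw [heq] at h; linarith

lemma log_sub_ge {u v : ℝ} (hu : 0 < u) (huv : u ≤ v) :
    (v - u) / v ≤ Real.log v - Real.log u := by
  have hv : 0 < v := lt_of_lt_of_le hu huv
  have h := Real.log_le_sub_one_of_pos (div_pos hu hv)
  rw [Real.log_div (ne_of_gt hu) (ne_of_gt hv)] at h
  have heq : u / v - 1 = -((v - u) / v) := by field_simp; ring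
  rw [heq] at h; linarith

lemma ell_diff_eq {x y : ℝ} (hx : 0 < x) (hy : 0 < y) :
    ell x - ell y = Real.log ((x+1)*y) - Real.log (x*(y+1)) := by
  unfold ell
  rw [Real.log_mul (by positivity) (ne_of_gt hy),
      Real.log_mul (ne_of_gt hx) (by positivity)]
  ring

lemma ell_sub_ell_ge {x y : ℝ} (hx : 0 < x) (hxy : x ≤ y) :
    (y - x) / ((x+1) * y) ≤ ell x - ell y := by
  have hy : 0 < y := lt_of_lt_of_le hx hxy
  rw [ell_diff_eq hx hy]
  have hle : x*(y+1) ≤ (x+1)*y := by nlinarith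
  have h := log_sub_ge (by positivity : (0:ℝ) < x*(y+1)) hle
  have heq : (x+1)*y - x*(y+1) = y - x := by ring
  rw [heq] at h
  exact h

lemma ell_sub_ell_le {x y : ℝ} (hx : 0 < x) (hxy : x ≤ y) :
    ell x - ell y ≤ (y - x) / (x * (y+1)) := by
  have hy : 0 < y := lt_of_lt_of_le hx hxy
  rw [ell_diff_eq hx hy]
  have hle : x*(y+1) ≤ (x+1)*y := by nlinarith
  have h := log_sub_le (by positivity : (0:ℝ) < x*(y+1)) hle
  have heq : (x+1)*y - x*(y+1) = y - x := by ring
  rw [heq] at h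
  exact h

lemma ell_strictAnti {x y : ℝ} (hx : 0 < x) (hxy : x < y) : ell y < ell x := by
  have h := ell_sub_ell_ge hx (le_of_lt hxy)
  have hy : 0 < y := lt_trans hx hxy
  have : 0 < (y - x) / ((x+1)*y) := by
    apply div_pos (by linarith); positivity
  linarith

lemma ell_anti {x y : ℝ} (hx : 0 < x) (hxy : x ≤ y) : ell y ≤ ell x := by
  rcases eq_or_lt_of_le hxy with h | h
  · rw [h]
  · exact le_of_lt (ell_strictAnti hx h)

lemma ell_sub_nonneg {x y : ℝ} (hx : 0 < x) (hxy : x ≤ y) : 0 ≤ ell x - ell y :=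
  sub_nonneg.mpr (ell_anti hx hxy)

lemma abs_ell_sub_le {m x y : ℝ} (hm : 0 < m) (hx : m ≤ x) (hy : m ≤ y) :
    |ell x - ell y| ≤ |x - y| / m^2 := by
  have key : ∀ u v : ℝ, m ≤ u → u ≤ v → ell u - ell v ≤ (v - u) / m^2 := by
    intro u v hu huv
    have hu0 : 0 < u := lt_of_lt_of_le hm hu
    have hv0 : 0 < v := lt_of_lt_of_le hu0 huv
    calc ell u - ell v ≤ (v - u) / (u * (v+1)) := ell_sub_ell_le hu0 huv
      _ ≤ (v - u) / m^2 := by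
          apply div_le_div_of_nonneg_left (by linarith) (by positivity)
          nlinarith
  rcases le_total x y with h | h
  · rw [abs_of_nonneg (ell_sub_nonneg (lt_of_lt_of_le hm hx) h),
        abs_of_nonpos (by linarith : x - y ≤ 0)]
    calc ell x - ell y ≤ (y - x)/m^2 := key x y hx h
      _ = -(x-y)/m^2 := by ring
  · rw [abs_of_nonpos (by
        have := ell_sub_nonneg (lt_of_lt_of_le hm hy) h; linarith : ell x - ell y ≤ 0),
        abs_of_nonneg (by linarith : (0:ℝ) ≤ x - y)]
    have := key y x hy h
    linarith

lemma abs_sub_le_of_ell {X x y : ℝ} (hx : 0 < x) (hy : 0 < y) (hxX : x ≤ X) (hyX : y ≤ X) :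
    |x - y| ≤ (X+1) * X * |ell x - ell y| := by
  have key : ∀ u v : ℝ, 0 < u → u ≤ v → v ≤ X → u ≤ X →
      v - u ≤ (X+1) * X * (ell u - ell v) := by
    intro u v hu huv hvX huX
    have hv : 0 < v := lt_of_lt_of_le hu huv
    have h1 := ell_sub_ell_ge hu huv
    have h2 : (v - u) ≤ (u+1)*v * (ell u - ell v) := by
      rw [div_le_iff₀ (by positivity)] at h1
      linarith [h1]
    have h3 : (u+1)*v * (ell u - ell v) ≤ (X+1)*X*(ell u - ell v) := by
      apply mul_le_mul_of_nonneg_right _ (ell_sub_nonneg hu huv)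
      have : 0 < X := lt_of_lt_of_le hv hvX
      nlinarith
    linarith
  rcases le_total x y with h | h
  · rw [abs_of_nonpos (by linarith : x - y ≤ 0),
        abs_of_nonneg (ell_sub_nonneg hx h)]
    have := key x y hx h hyX hxX
    linarith
  · rw [abs_of_nonneg (by linarith : (0:ℝ) ≤ x - y),
        abs_of_nonpos (by
          have := ell_sub_nonneg hy h; linarith : ell x - ell y ≤ 0)]
    have := key y x hy h hxX hyX
    linarith

noncomputable def Dfun (w x : ℝ) : ℝ := g0 w + ell w * (x - w) - g0 x

lemma Dfun_self (w : ℝ) : Dfun w w = 0 := by unfold Dfun; ring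

lemma Dfun_cont (w : ℝ) : Continuous (Dfun w) := by
  unfold Dfun
  exact (continuous_const.add (continuous_const.mul
    (continuous_id.sub continuous_const))).sub g0_cont

lemma Dfun_hasDeriv {w y : ℝ} (hy : 0 < y) :
    HasDerivAt (Dfun w) (ell w - ell y) y := by
  have h1 : HasDerivAt (fun x : ℝ => g0 w + ell w * (x - w)) (ell w) y := by
    have := (((hasDerivAt_id y).sub_const w).const_mul (ell w)).const_add (g0 w)
    simpa using this
  have := h1.sub (hasDerivAt_g0 hy)
  exact this

lemma Dfun_pos {w x : ℝ} (hw : 0 < w) (hx : 0 ≤ x) (hne : x ≠ w) :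
    0 < Dfun w x := by
  rcases lt_or_gt_of_ne hne with h | h
  · -- x < w : strict anti on Icc 0 w
    have hanti : StrictAntiOn (Dfun w) (Set.Icc 0 w) := by
      apply strictAntiOn_of_deriv_neg (convex_Icc 0 w) (Dfun_cont w).continuousOn
      intro y hy
      rw [interior_Icc] at hy
      rw [(Dfun_hasDeriv (w := w) hy.1).deriv]
      have := ell_strictAnti hy.1 hy.2
      linarith
    have := hanti (Set.mem_Icc.mpr ⟨hx, le_of_lt h⟩)
      (Set.mem_Icc.mpr ⟨le_of_lt hw, le_refl w⟩) h
    rw [Dfun_self] at this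
    linarith
  · -- w < x : strict mono on Ici w
    have hmono : StrictMonoOn (Dfun w) (Set.Ici w) := by
      apply strictMonoOn_of_deriv_pos (convex_Ici w) (Dfun_cont w).continuousOn
      intro y hy
      rw [interior_Ici] at hy
      rw [(Dfun_hasDeriv (w := w) (lt_trans hw hy)).deriv]
      have := ell_strictAnti hw hy
      linarith
    have := hmono (Set.mem_Ici.mpr (le_refl w)) (Set.mem_Ici.mpr (le_of_lt h)) h
    rw [Dfun_self] at this
    linarith

lemma tangent_le {w x : ℝ} (hw : 0 < w) (hx : 0 ≤ x) :
    g0 x ≤ g0 w + ell w * (x - w) := by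
  rcases eq_or_ne x w with h | h
  · rw [h]; simp
  · have := Dfun_pos hw hx h; unfold Dfun at this; linarith

lemma tangent_eq {w x : ℝ} (hw : 0 < w) (hx : 0 ≤ x)
    (h : g0 w + ell w * (x - w) - g0 x = 0) : x = w := by
  by_contra hne
  have := Dfun_pos hw hx hne
  unfold Dfun at this
  linarith

lemma sum_if_lt (p n : ℕ) (x y : ℝ) :
    ∑ j : Fin (p+n), (if (j:ℕ) < p then x else y) = p*x + n*y := by
  rw [Fin.sum_univ_add]
  have h1 : (∑ i : Fin p, (if ((Fin.castAdd n i : Fin (p+n)) : ℕ) < p then x else y))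
      = p * x := by
    rw [Finset.sum_congr rfl (fun i _ => if_pos (by simpa using i.isLt))]
    simp [Finset.sum_const, mul_comm]
  have h2 : (∑ i : Fin n, (if ((Fin.natAdd p i : Fin (p+n)) : ℕ) < p then x else y))
      = n * y := by
    rw [Finset.sum_congr rfl (fun i _ => if_neg (by simp))]
    simp [Finset.sum_const, mul_comm]
  rw [h1, h2]

/-- the block matrix -/
def Wblk (p n : ℕ) (a b d : ℝ) : Fin (p+n) → Fin (p+n) → ℝ :=
  fun i j => if (i:ℕ) < p then (if (j:ℕ) < p then a else b)
    else (if (j:ℕ) < p then b else d)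

lemma block_unique_max (p n R S : ℕ) (a b d : ℝ)
    (ha : 0 < a) (hb : 0 < b) (hd : 0 < d)
    (hr : p * a + n * b = (R:ℝ)) (hs : p * b + n * d = (S:ℝ))
    (hstat : ell a + ell d = 2 * ell b)
    (Z : Fin (p+n) → Fin (p+n) → ℝ)
    (hZ : Z ∈ transportPolytope (margin p n R S) (margin p n R S))
    (hmax : IsMaxOn gFun (transportPolytope (margin p n R S) (margin p n R S)) Z) :
    ∀ i j, Z i j = Wblk p n a b d i j := by
  set W := Wblk p n a b d with hW
  have hWval : ∀ i j : Fin (p+n), W i j = if (i:ℕ) < p then (if (j:ℕ) < p then a else b)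
      else (if (j:ℕ) < p then b else d) := fun i j => rfl
  have hWpos : ∀ i j, 0 < W i j := by
    intro i j; rw [hWval]
    by_cases hi : (i:ℕ) < p <;> by_cases hj : (j:ℕ) < p <;> simp [hi, hj] <;> assumption
  have hWrow : ∀ i, ∑ j, W i j = margin p n R S i := by
    intro i
    by_cases hi : (i:ℕ) < p
    · have : ∀ j : Fin (p+n), W i j = if (j:ℕ) < p then a else b := by
        intro j; rw [hWval, if_pos hi]
      rw [Finset.sum_congr rfl (fun j _ => this j), sum_if_lt, hr, margin, if_pos hi]
    · have : ∀ j : Fin (p+n), W i j = if (j:ℕ) < p then b else d := by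
        intro j; rw [hWval, if_neg hi]
      rw [Finset.sum_congr rfl (fun j _ => this j), sum_if_lt, hs, margin, if_neg hi]
  have hWcol : ∀ j, ∑ i, W i j = margin p n R S j := by
    intro j
    by_cases hj : (j:ℕ) < p
    · have : ∀ i : Fin (p+n), W i j = if (i:ℕ) < p then a else b := by
        intro i; rw [hWval, if_pos hj]; by_cases hi : (i:ℕ) < p <;> simp [hi, hj]
      rw [Finset.sum_congr rfl (fun i _ => this i), sum_if_lt, hr, margin, if_pos hj]
    · have : ∀ i : Fin (p+n), W i j = if (i:ℕ) < p then b else d := by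
        intro i; rw [hWval, if_neg hj]; by_cases hi : (i:ℕ) < p <;> simp [hi, hj]
      rw [Finset.sum_congr rfl (fun i _ => this i), sum_if_lt, hs, margin, if_neg hj]
  have hWmem : W ∈ transportPolytope (margin p n R S) (margin p n R S) :=
    ⟨fun i j => le_of_lt (hWpos i j), hWrow, hWcol⟩
  -- lambda decomposition
  set lam : Fin (p+n) → ℝ := fun i => if (i:ℕ) < p then ell a / 2 else ell d / 2 with hlam
  have hell : ∀ i j, ell (W i j) = lam i + lam j := by
    intro i j
    rw [hWval, hlam]
    by_cases hi : (i:ℕ) < p <;> by_cases hj : (j:ℕ) < p <;> simp [hi, hj] <;> linarith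
  have hZnn := hZ.1
  have hZrow := hZ.2.1
  have hZcol := hZ.2.2
  have hg : ∀ (X : Fin (p+n) → Fin (p+n) → ℝ), gFun X = ∑ i, ∑ j, g0 (X i j) :=
    fun X => rfl
  -- tangent inequality per entry
  have htan : ∀ i j, g0 (Z i j) ≤ g0 (W i j) + (lam i + lam j) * (Z i j - W i j) := by
    intro i j
    rw [← hell]
    exact tangent_le (hWpos i j) (hZnn i j)
  -- cross term is zero
  have e1 : ∑ i, ∑ j, lam i * (Z i j - W i j) = 0 := by
    apply Finset.sum_eq_zero; intro i _
    rw [← Finset.mul_sum, Finset.sum_sub_distrib, hZrow i, hWrow i, sub_self, mul_zero]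
  have e2 : ∑ i, ∑ j, lam j * (Z i j - W i j) = 0 := by
    rw [Finset.sum_comm]
    apply Finset.sum_eq_zero; intro j _
    rw [← Finset.mul_sum, Finset.sum_sub_distrib, hZcol j, hWcol j, sub_self, mul_zero]
  have hcross : ∑ i, ∑ j, (lam i + lam j) * (Z i j - W i j) = 0 := by
    have hexp : ∀ i j : Fin (p+n), (lam i + lam j) * (Z i j - W i j)
        = lam i * (Z i j - W i j) + lam j * (Z i j - W i j) := fun i j => by ring
    simp_rw [hexp, Finset.sum_add_distrib]
    rw [e1, e2, add_zero]
  -- total tangent sum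
  have hsumT : ∑ i, ∑ j, (g0 (W i j) + (lam i + lam j) * (Z i j - W i j) - g0 (Z i j)) = 0 := by
    simp_rw [Finset.sum_sub_distrib, Finset.sum_add_distrib]
    rw [hcross]
    have h1 : gFun W ≤ gFun Z := hmax hWmem
    have h2 : gFun Z ≤ gFun W := by
      rw [hg Z, hg W]
      calc ∑ i, ∑ j, g0 (Z i j)
          ≤ ∑ i, ∑ j, (g0 (W i j) + (lam i + lam j) * (Z i j - W i j)) := by
            apply Finset.sum_le_sum; intro i _
            apply Finset.sum_le_sum; intro j _
            exact htan i j
        _ = ∑ i, ∑ j, g0 (W i j) := by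
            simp_rw [Finset.sum_add_distrib]; rw [hcross, add_zero]
      -- done
    rw [hg Z, hg W] at h1 h2
    linarith
  -- each term is zero
  have hterm : ∀ i ∈ Finset.univ, ∀ j ∈ (Finset.univ : Finset (Fin (p+n))),
      g0 (W i j) + (lam i + lam j) * (Z i j - W i j) - g0 (Z i j) = 0 := by
    have houter := (Finset.sum_eq_zero_iff_of_nonneg (fun i _ => by
      apply Finset.sum_nonneg; intro j _
      have := htan i j; linarith)).mp hsumT
    intro i hi j hj
    have hinner := (Finset.sum_eq_zero_iff_of_nonneg (fun j _ => by
      have := htan i j; linarith)).mp (houter i hi)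
    exact hinner j hj
  intro i j
  have h := hterm i (Finset.mem_univ i) j (Finset.mem_univ j)
  rw [← hell i j] at h
  exact tangent_eq (hWpos i j) (hZnn i j) h

lemma one_lt_exp' {u : ℝ} (hu : 0 < u) : 1 < Real.exp u := by
  rw [show (1:ℝ) = Real.exp 0 from (Real.exp_zero).symm]
  exact Real.exp_lt_exp.mpr hu

lemma ell_inv_exp {u : ℝ} (hu : 0 < u) : ell ((Real.exp u - 1)⁻¹) = u := by
  have h1 : 0 < Real.exp u - 1 := by linarith [one_lt_exp' hu]
  set t := (Real.exp u - 1)⁻¹ with ht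
  have ht0 : 0 < t := inv_pos.mpr h1
  have key : (t + 1) / t = Real.exp u := by
    rw [add_div, div_self (ne_of_gt ht0), ht, one_div, inv_inv]
    ring
  unfold ell
  rw [← Real.log_div (by linarith : t + 1 ≠ 0) (ne_of_gt ht0), key, Real.log_exp]

noncomputable def bbF (R e : ℝ) (a : ℝ) : ℝ := R - e * a
noncomputable def ddF (S R e : ℝ) (a : ℝ) : ℝ := S - e * bbF R e a
noncomputable def PhiF (S R e : ℝ) (a : ℝ) : ℝ :=
  ell a + ell (ddF S R e a) - 2 * ell (bbF R e a)

lemma exists_triple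
    (B C : ℝ) (hB : 0 < B) (hC : 0 < C)
    (γ : ℝ) (hγ : γ = 2 * ell (B*C) - ell C) (hγpos : 0 < γ)
    (a₁ : ℝ) (ha₁ : a₁ = (Real.exp (γ/2) - 1)⁻¹)
    (p n R S : ℕ) (hn : 0 < n)
    (hε1 : (p:ℝ)/n * a₁ + 1/n ≤ B*C/2)
    (hε2 : (p:ℝ)/n * (B*C) + 1/n ≤ C/2)
    (hε3 : ((p:ℝ)/n * (B*C) + 1/n) / (C/2)^2 ≤ γ/4)
    (hR1 : B*C*n - 1 ≤ (R:ℝ)) (hR2 : (R:ℝ) ≤ B*C*n)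
    (hS1 : C*n - 1 ≤ (S:ℝ)) (hS2 : (S:ℝ) ≤ C*n) :
    ∃ a b d : ℝ, 0 < a ∧ 0 < b ∧ 0 < d ∧
      (p:ℝ) * a + (n:ℝ) * b = (R:ℝ) ∧ (p:ℝ) * b + (n:ℝ) * d = (S:ℝ) ∧
      ell a + ell d = 2 * ell b ∧
      a ≤ a₁ ∧ B*C/2 ≤ b ∧ b ≤ B*C ∧ |b - B*C| ≤ (p:ℝ)/n * a₁ + 1/n ∧
      C/2 ≤ d ∧ d ≤ C ∧ |d - C| ≤ (p:ℝ)/n * (B*C) + 1/n := by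
  have hn0 : (0:ℝ) < n := by exact_mod_cast hn
  set e : ℝ := (p:ℝ)/n with he
  set Rn : ℝ := (R:ℝ)/n with hRn
  set Sn : ℝ := (S:ℝ)/n with hSn
  have hε0 : (0:ℝ) ≤ e := by rw [he]; positivity
  have hBC : 0 < B*C := by positivity
  have ha₁pos : 0 < a₁ := by
    rw [ha₁]; exact inv_pos.mpr (by linarith [one_lt_exp' (by linarith : (0:ℝ) < γ/2)])
  have hella₁ : ell a₁ = γ/2 := by rw [ha₁]; exact ell_inv_exp (by linarith)
  have hRn1 : B*C - 1/n ≤ Rn := by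
    rw [hRn, le_div_iff₀ hn0, show (B*C - 1/(n:ℝ))*n = B*C*n - 1 by field_simp]
    linarith
  have hRn2 : Rn ≤ B*C := by rw [hRn, div_le_iff₀ hn0]; linarith
  have hSn1 : C - 1/n ≤ Sn := by
    rw [hSn, le_div_iff₀ hn0, show (C - 1/(n:ℝ))*n = C*n - 1 by field_simp]
    linarith
  have hSn2 : Sn ≤ C := by rw [hSn, div_le_iff₀ hn0]; linarith
  -- bounds for a ∈ [0, a₁]
  have hbb_ub : ∀ a : ℝ, 0 ≤ a → bbF Rn e a ≤ B*C := by
    intro a ha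
    have h1 : 0 ≤ e * a := mul_nonneg hε0 ha
    unfold bbF; linarith
  have hbb_lb : ∀ a : ℝ, a ≤ a₁ → B*C/2 ≤ bbF Rn e a := by
    intro a ha
    have h1 : e * a ≤ e * a₁ := mul_le_mul_of_nonneg_left ha hε0
    unfold bbF; linarith
  have hbb_pos : ∀ a : ℝ, a ≤ a₁ → 0 < bbF Rn e a := by
    intro a ha; have := hbb_lb a ha; linarith
  have hdd_ub : ∀ a : ℝ, a ≤ a₁ → ddF Sn Rn e a ≤ C := by
    intro a ha
    have h2 : 0 ≤ e * bbF Rn e a := mul_nonneg hε0 (le_of_lt (hbb_pos a ha))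
    unfold ddF; linarith
  have hdd_lb : ∀ a : ℝ, 0 ≤ a → a ≤ a₁ → C - (e * (B*C) + 1/n) ≤ ddF Sn Rn e a := by
    intro a ha0 ha
    have h1 : e * bbF Rn e a ≤ e * (B*C) :=
      mul_le_mul_of_nonneg_left (hbb_ub a ha0) hε0
    unfold ddF; linarith
  have hdd_half : ∀ a : ℝ, 0 ≤ a → a ≤ a₁ → C/2 ≤ ddF Sn Rn e a := by
    intro a ha0 ha; linarith [hdd_lb a ha0 ha, hε2]
  have hdd_pos : ∀ a : ℝ, 0 ≤ a → a ≤ a₁ → 0 < ddF Sn Rn e a := by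
    intro a ha0 ha; linarith [hdd_half a ha0 ha]
  -- endpoints
  set M : ℝ := 2 * ell (B*C/2) + 1 with hM
  have hMpos : 0 < M := by
    have := ell_pos (show (0:ℝ) < B*C/2 by linarith)
    rw [hM]; linarith
  set t₀ : ℝ := (Real.exp M - 1)⁻¹ with ht₀
  have ht₀pos : 0 < t₀ := inv_pos.mpr (by linarith [one_lt_exp' hMpos])
  have hellt₀ : ell t₀ = M := ell_inv_exp hMpos
  set tlo : ℝ := min t₀ a₁ with htlo
  have htlopos : 0 < tlo := lt_min ht₀pos ha₁pos
  have htlo_le : tlo ≤ a₁ := min_le_right _ _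
  have hell_tlo : M ≤ ell tlo := by
    rw [← hellt₀]; exact ell_anti htlopos (min_le_left _ _)
  -- Φ tlo ≥ 1
  have hΦtlo : 1 ≤ PhiF Sn Rn e tlo := by
    have h1 : ell (bbF Rn e tlo) ≤ ell (B*C/2) :=
      ell_anti (by linarith : (0:ℝ) < B*C/2) (hbb_lb tlo htlo_le)
    have h2 : 0 < ell (ddF Sn Rn e tlo) :=
      ell_pos (hdd_pos tlo (le_of_lt htlopos) htlo_le)
    unfold PhiF; rw [hM] at hell_tlo; linarith
  -- Φ a₁ ≤ -γ/4
  have hΦa₁ : PhiF Sn Rn e a₁ ≤ -(γ/4) := by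
    have hbpos := hbb_pos a₁ (le_refl a₁)
    have hdpos := hdd_pos a₁ (le_of_lt ha₁pos) (le_refl a₁)
    have h1 : ell (B*C) ≤ ell (bbF Rn e a₁) :=
      ell_anti hbpos (hbb_ub a₁ (le_of_lt ha₁pos))
    have h2 : ell (ddF Sn Rn e a₁) - ell C ≤ γ/4 := by
      have hlip := abs_ell_sub_le (show (0:ℝ) < C/2 by linarith)
        (hdd_half a₁ (le_of_lt ha₁pos) (le_refl a₁)) (show C/2 ≤ C by linarith)
      have habs : |ddF Sn Rn e a₁ - C| ≤ e * (B*C) + 1/n := by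
        rw [abs_of_nonpos (by linarith [hdd_ub a₁ (le_refl a₁)] :
          ddF Sn Rn e a₁ - C ≤ 0)]
        linarith [hdd_lb a₁ (le_of_lt ha₁pos) (le_refl a₁)]
      have h3 : |ell (ddF Sn Rn e a₁) - ell C| ≤ (e * (B*C) + 1/n) / (C/2)^2 := by
        calc |ell (ddF Sn Rn e a₁) - ell C| ≤ |ddF Sn Rn e a₁ - C| / (C/2)^2 := hlip
          _ ≤ (e * (B*C) + 1/n) / (C/2)^2 := by gcongr
      calc ell (ddF Sn Rn e a₁) - ell C ≤ |ell (ddF Sn Rn e a₁) - ell C| := le_abs_self _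
        _ ≤ (e * (B*C) + 1/n) / (C/2)^2 := h3
        _ ≤ γ/4 := hε3
    unfold PhiF
    rw [hγ] at hella₁ ⊢
    linarith [hella₁]
  -- continuity of Φ on Icc tlo a₁
  have hcont : ContinuousOn (PhiF Sn Rn e) (Set.Icc tlo a₁) := by
    intro a ha
    apply ContinuousAt.continuousWithinAt
    have ha0 : 0 < a := lt_of_lt_of_le htlopos ha.1
    have hbpos := hbb_pos a ha.2
    have hdpos := hdd_pos a (le_of_lt ha0) ha.2
    have hbbcont : ContinuousAt (bbF Rn e) a := by unfold bbF; fun_prop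
    have hddcont : ContinuousAt (ddF Sn Rn e) a := by unfold ddF bbF; fun_prop
    have c1 : ContinuousAt (fun x => ell (ddF Sn Rn e x)) a := by
      have := ContinuousAt.comp (ell_contAt hdpos) hddcont
      exact this
    have c2 : ContinuousAt (fun x => ell (bbF Rn e x)) a := by
      have := ContinuousAt.comp (ell_contAt hbpos) hbbcont
      exact this
    unfold PhiF
    exact ((ell_contAt ha0).add c1).sub (c2.const_mul 2)
  -- IVT
  have hIVT := intermediate_value_Icc' htlo_le hcont
  have h0mem : (0:ℝ) ∈ Set.Icc (PhiF Sn Rn e a₁) (PhiF Sn Rn e tlo) :=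
    ⟨by linarith, by linarith⟩
  obtain ⟨a, haIcc, hΦa⟩ := hIVT h0mem
  have ha0 : 0 < a := lt_of_lt_of_le htlopos haIcc.1
  have hbpos := hbb_pos a haIcc.2
  have hdpos := hdd_pos a (le_of_lt ha0) haIcc.2
  refine ⟨a, bbF Rn e a, ddF Sn Rn e a, ha0, hbpos, hdpos, ?_, ?_, ?_, haIcc.2,
    hbb_lb a haIcc.2, hbb_ub a (le_of_lt ha0), ?_,
    hdd_half a (le_of_lt ha0) haIcc.2, hdd_ub a haIcc.2, ?_⟩
  · show (p:ℝ) * a + (n:ℝ) * bbF Rn e a = (R:ℝ)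
    unfold bbF; rw [hRn, he]; field_simp; ring
  · show (p:ℝ) * bbF Rn e a + (n:ℝ) * ddF Sn Rn e a = (S:ℝ)
    unfold ddF; unfold bbF; rw [hSn, hRn, he]; field_simp; ring
  · unfold PhiF at hΦa; linarith
  · rw [abs_of_nonpos (by linarith [hbb_ub a (le_of_lt ha0)] : bbF Rn e a - B*C ≤ 0)]
    have h1 : e * a ≤ e * a₁ := mul_le_mul_of_nonneg_left haIcc.2 hε0
    unfold bbF
    linarith
  · rw [abs_of_nonpos (by linarith [hdd_ub a haIcc.2] : ddF Sn Rn e a - C ≤ 0)]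
    linarith [hdd_lb a (le_of_lt ha0) haIcc.2]

set_option maxHeartbeats 1000000 in
theorem typicalTable_subcritical_asymptotics
    (B C δ : ℝ) (hB : 0 < B) (hC : 0 < C) (hδ0 : 0 ≤ δ) (hδ1 : δ < 1)
    (Bc : ℝ) (hBc : Bc = 1 + Real.sqrt (1 + 1 / C)) (hBlt : B < Bc) :
    ∃ K : ℝ, 0 < K ∧ ∃ N : ℕ, ∀ n : ℕ, ∀ hn : 1 ≤ n, N ≤ n →
      ∀ Z : Fin (⌊(n : ℝ) ^ δ⌋₊ + n) → Fin (⌊(n : ℝ) ^ δ⌋₊ + n) → ℝ,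
        Z ∈ transportPolytope
            (margin ⌊(n : ℝ) ^ δ⌋₊ n ⌊B * C * n⌋₊ ⌊C * n⌋₊)
            (margin ⌊(n : ℝ) ^ δ⌋₊ n ⌊B * C * n⌋₊ ⌊C * n⌋₊) →
        IsMaxOn gFun
          (transportPolytope
            (margin ⌊(n : ℝ) ^ δ⌋₊ n ⌊B * C * n⌋₊ ⌊C * n⌋₊)
            (margin ⌊(n : ℝ) ^ δ⌋₊ n ⌊B * C * n⌋₊ ⌊C * n⌋₊)) Z →
        |Z ⟨0, by omega⟩ ⟨0, by omega⟩
            - B ^ 2 * (C + 1) / ((Bc - B) * (Bc + B - 2))| ≤ K * (n : ℝ) ^ (δ - 1) ∧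
        |Z ⟨0, by omega⟩ ⟨⌊(n : ℝ) ^ δ⌋₊, by omega⟩ - B * C| ≤ K * (n : ℝ) ^ (δ - 1) := by
  -- basic constants
  have hC1 : (0:ℝ) < 1 + 1/C := by positivity
  have hs0 : 0 ≤ Real.sqrt (1 + 1/C) := Real.sqrt_nonneg _
  have hs2 : (Real.sqrt (1 + 1/C))^2 = 1 + 1/C := Real.sq_sqrt (le_of_lt hC1)
  have hs1 : 1 < Real.sqrt (1 + 1/C) := by nlinarith [one_div_pos.mpr hC]
  have hBc2 : 2 < Bc := by rw [hBc]; linarith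
  have hDpos : 0 < (Bc - B)*(Bc + B - 2) := mul_pos (by linarith) (by linarith)
  have hDen : (Bc - B)*(Bc + B - 2) = 2*B - B^2 + 1/C := by
    rw [hBc]
    have h : (1 + Real.sqrt (1+1/C) - B)*((1 + Real.sqrt (1+1/C)) + B - 2)
        = (Real.sqrt (1+1/C))^2 - (B-1)^2 := by ring
    rw [h, hs2]; ring
  set A := B ^ 2 * (C + 1) / ((Bc - B) * (Bc + B - 2)) with hA
  have hApos : 0 < A := div_pos (by positivity) hDpos
  have hDen2pos : 0 < 2*B - B^2 + 1/C := hDen ▸ hDpos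
  have hBCpos : 0 < B*C := by positivity
  have hA' : A = B^2*(C+1)/(2*B - B^2 + 1/C) := by rw [hA, hDen]
  set γ : ℝ := 2 * ell (B*C) - ell C with hγdef
  -- ell A = 2 ell (BC) - ell C
  have hellA : ell A = γ := by
    rw [hγdef]
    have hne : 2*B - B^2 + 1/C ≠ 0 := ne_of_gt hDen2pos
    have hCne : C ≠ 0 := ne_of_gt hC
    have h2d : (0:ℝ) < 2*B*C - B^2*C + 1 := by
      have hm := mul_pos hC hDen2pos
      have hexp : C * (2*B - B^2 + 1/C) = 2*B*C - B^2*C + 1 := by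
        field_simp
      linarith [hexp ▸ hm]
    have h2dne : 2*B*C - B^2*C + 1 ≠ 0 := ne_of_gt h2d
    have hA2 : A = B^2*C*(C+1)/(2*B*C - B^2*C + 1) := by
      rw [hA', div_eq_div_iff hne h2dne]
      field_simp
    have key : (A+1) * ((B*C)^2 * (C+1)) = A * ((B*C+1)^2 * C) := by
      rw [hA2, div_add_one h2dne, div_mul_eq_mul_div, div_mul_eq_mul_div,
        div_eq_div_iff h2dne h2dne]; ring
    have lkey := congrArg Real.log key
    rw [Real.log_mul (by positivity) (by positivity),
        Real.log_mul (by positivity) (by positivity),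
        Real.log_mul (by positivity) (by positivity),
        Real.log_mul (by positivity) (by positivity),
        Real.log_pow, Real.log_pow] at lkey
    unfold ell
    push_cast at lkey
    linarith
  have hγpos : 0 < γ := hellA ▸ ell_pos hApos
  set a₁ : ℝ := (Real.exp (γ/2) - 1)⁻¹ with ha₁def
  have ha₁pos : 0 < a₁ :=
    inv_pos.mpr (by linarith [one_lt_exp' (by linarith : (0:ℝ) < γ/2)])
  set X : ℝ := max a₁ A with hX
  have hXpos : 0 < X := lt_of_lt_of_le ha₁pos (le_max_left _ _)
  set Ka : ℝ := (X+1)*X*(2*(a₁+1)/(B*C/2)^2 + (B*C+1)/(C/2)^2) with hKa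
  have hKapos : 0 < Ka := by
    apply mul_pos (mul_pos (by linarith) hXpos)
    have h1 : 0 < 2*(a₁+1)/(B*C/2)^2 := by positivity
    have h2 : 0 < (B*C+1)/(C/2)^2 := by positivity
    linarith
  set K : ℝ := Ka + (a₁ + 1) + 1 with hK
  have hKpos : 0 < K := by positivity
  -- smallness threshold
  set η₀ : ℝ := min (B*C/2/(a₁+1)) (min (C/2/(B*C+1)) (γ/4*(C/2)^2/(B*C+1))) with hη₀
  have hη₀pos : 0 < η₀ := by
    apply lt_min (by positivity) (lt_min (by positivity) (by positivity))
  -- find N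
  have ht : Filter.Tendsto (fun n : ℕ => ((n:ℝ))^(δ-1)) Filter.atTop (nhds 0) := by
    have h1 : Filter.Tendsto (fun x : ℝ => x^(δ-1)) Filter.atTop (nhds 0) := by
      have := tendsto_rpow_neg_atTop (by linarith : (0:ℝ) < 1-δ)
      simpa [show -(1-δ) = δ-1 by ring] using this
    exact h1.comp tendsto_natCast_atTop_atTop
  have hev : ∀ᶠ n : ℕ in Filter.atTop, ((n:ℝ))^(δ-1) ≤ η₀ :=
    ht.eventually (eventually_le_nhds hη₀pos)
  obtain ⟨N, hN⟩ := Filter.eventually_atTop.mp hev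
  refine ⟨K, hKpos, N, ?_⟩
  intro n hn hNn
  set p := ⌊(n : ℝ) ^ δ⌋₊ with hp
  set R := ⌊B * C * (n:ℝ)⌋₊ with hR
  set S := ⌊C * (n:ℝ)⌋₊ with hS
  intro Z hZmem hZmax
  have hn0 : (0:ℝ) < n := by exact_mod_cast hn
  have hn1 : (1:ℝ) ≤ n := by exact_mod_cast hn
  set η : ℝ := (n:ℝ)^(δ-1) with hη
  have hηpos : 0 < η := Real.rpow_pos_of_pos hn0 _
  have hηle : η ≤ η₀ := hN n hNn
  -- floor facts
  have hp1 : 1 ≤ p := by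
    apply Nat.le_floor
    have h0 : (n:ℝ)^(0:ℝ) ≤ (n:ℝ)^δ := Real.rpow_le_rpow_of_exponent_le hn1 hδ0
    rw [Real.rpow_zero] at h0
    exact_mod_cast h0
  have hp0 : 0 < p := hp1
  have hR2 : (R:ℝ) ≤ B*C*n := Nat.floor_le (by positivity)
  have hR1 : B*C*n - 1 ≤ (R:ℝ) := le_of_lt (Nat.sub_one_lt_floor _)
  have hS2 : (S:ℝ) ≤ C*n := Nat.floor_le (by positivity)
  have hS1 : C*n - 1 ≤ (S:ℝ) := le_of_lt (Nat.sub_one_lt_floor _)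
  have hrpow_div : (n:ℝ)^(δ-1) = (n:ℝ)^δ/(n:ℝ) := by
    rw [Real.rpow_sub hn0, Real.rpow_one]
  have he_le : (p:ℝ)/n ≤ η := by
    rw [hη, hrpow_div]
    gcongr
    exact Nat.floor_le (by positivity)
  have hinv : 1/(n:ℝ) ≤ η := by
    rw [hη, show (1:ℝ)/(n:ℝ) = (n:ℝ)^(-1:ℝ) by
      rw [Real.rpow_neg (le_of_lt hn0), Real.rpow_one, one_div]]
    exact Real.rpow_le_rpow_of_exponent_le hn1 (by linarith)
  have he0 : (0:ℝ) ≤ (p:ℝ)/n := by positivity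
  -- smallness conditions
  have hη₀1 : η₀ ≤ B*C/2/(a₁+1) := min_le_left _ _
  have hη₀2 : η₀ ≤ C/2/(B*C+1) := le_trans (min_le_right _ _) (min_le_left _ _)
  have hη₀3 : η₀ ≤ γ/4*(C/2)^2/(B*C+1) := le_trans (min_le_right _ _) (min_le_right _ _)
  have hmain : (p:ℝ)/n * a₁ + 1/n ≤ (a₁ + 1) * η := by
    have h1 : (p:ℝ)/n * a₁ ≤ η * a₁ := mul_le_mul_of_nonneg_right he_le (le_of_lt ha₁pos)
    have h2 : (a₁ + 1) * η = η * a₁ + η := by ring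
    linarith only [h1, h2, hinv]
  have hmain2 : (p:ℝ)/n * (B*C) + 1/n ≤ (B*C + 1) * η := by
    have h1 : (p:ℝ)/n * (B*C) ≤ η * (B*C) := mul_le_mul_of_nonneg_right he_le (le_of_lt hBCpos)
    have h2 : (B*C + 1) * η = η * (B*C) + η := by ring
    linarith only [h1, h2, hinv]
  have hε1 : (p:ℝ)/n * a₁ + 1/n ≤ B*C/2 := by
    have h2 : (a₁+1) * η ≤ (a₁+1) * η₀ := mul_le_mul_of_nonneg_left hηle (by linarith)
    have h3 : (a₁+1) * η₀ ≤ B*C/2 := by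
      calc (a₁+1) * η₀ ≤ (a₁+1) * (B*C/2/(a₁+1)) :=
            mul_le_mul_of_nonneg_left hη₀1 (by linarith)
        _ = B*C/2 := by field_simp
    linarith only [hmain, h2, h3]
  have hε2 : (p:ℝ)/n * (B*C) + 1/n ≤ C/2 := by
    have h2 : (B*C+1) * η ≤ (B*C+1) * η₀ := mul_le_mul_of_nonneg_left hηle (by linarith)
    have h3 : (B*C+1) * η₀ ≤ C/2 := by
      calc (B*C+1) * η₀ ≤ (B*C+1) * (C/2/(B*C+1)) :=
            mul_le_mul_of_nonneg_left hη₀2 (by linarith)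
        _ = C/2 := by field_simp
    linarith only [hmain2, h2, h3]
  have hε3 : ((p:ℝ)/n * (B*C) + 1/n) / (C/2)^2 ≤ γ/4 := by
    have h2 : (B*C+1) * η ≤ (B*C+1) * η₀ := mul_le_mul_of_nonneg_left hηle (by linarith)
    have h3 : (B*C+1) * η₀ ≤ γ/4*(C/2)^2 := by
      calc (B*C+1) * η₀ ≤ (B*C+1) * (γ/4*(C/2)^2/(B*C+1)) :=
            mul_le_mul_of_nonneg_left hη₀3 (by linarith)
        _ = γ/4*(C/2)^2 := by field_simp
    rw [div_le_iff₀ (by positivity : (0:ℝ) < (C/2)^2)]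
    calc (p:ℝ)/n * (B*C) + 1/n ≤ (B*C+1)*η := hmain2
      _ ≤ (B*C+1)*η₀ := h2
      _ ≤ γ/4*(C/2)^2 := h3
      _ = γ/4*(C/2)^2 := rfl
  -- existence of the block solution
  obtain ⟨a, b, d, ha0, hb0, hd0, hrow, hcol, hstat, haa₁, hbhalf, hbBC, hbabs,
    hdhalf, hdC, hdabs⟩ :=
    exists_triple B C hB hC γ hγdef hγpos a₁ ha₁def p n R S (by omega) hε1 hε2 hε3 hR1 hR2 hS1 hS2
  -- Z equals the block matrix
  have hZW := block_unique_max p n R S a b d ha0 hb0 hd0 hrow hcol hstat Z hZmem hZmax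
  -- bounds
  have hbfin : |b - B*C| ≤ (a₁+1)*η := le_trans hbabs hmain
  have hdfin : |d - C| ≤ (B*C+1)*η := le_trans hdabs hmain2
  have h3 : |ell b - ell (B*C)| ≤ |b - B*C|/(B*C/2)^2 :=
    abs_ell_sub_le (by linarith : (0:ℝ) < B*C/2) hbhalf (by linarith)
  have h4 : |ell d - ell C| ≤ |d - C|/(C/2)^2 :=
    abs_ell_sub_le (by linarith : (0:ℝ) < C/2) hdhalf (by linarith)
  have h5 : |ell a - ell A| ≤ 2*|ell b - ell (B*C)| + |ell d - ell C| := by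
    have heq : ell a - ell A = 2*(ell b - ell (B*C)) - (ell d - ell C) := by
      rw [hellA, hγdef]; linarith [hstat]
    rw [heq]
    calc |2*(ell b - ell (B*C)) - (ell d - ell C)|
        ≤ |2*(ell b - ell (B*C))| + |ell d - ell C| := abs_sub _ _
      _ = 2*|ell b - ell (B*C)| + |ell d - ell C| := by
          rw [abs_mul, abs_two]
  have h6 : |a - A| ≤ (X+1)*X*|ell a - ell A| :=
    abs_sub_le_of_ell ha0 hApos (le_trans haa₁ (le_max_left _ _)) (le_max_right _ _)
  have hafin : |a - A| ≤ Ka * η := by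
    have hXX : (0:ℝ) ≤ (X+1)*X := by positivity
    calc |a - A| ≤ (X+1)*X*|ell a - ell A| := h6
      _ ≤ (X+1)*X*(2*(|b - B*C|/(B*C/2)^2) + |d - C|/(C/2)^2) := by
          apply mul_le_mul_of_nonneg_left _ hXX
          linarith
      _ ≤ (X+1)*X*(2*((a₁+1)*η/(B*C/2)^2) + (B*C+1)*η/(C/2)^2) := by
          apply mul_le_mul_of_nonneg_left _ hXX
          have e1 : |b - B*C|/(B*C/2)^2 ≤ (a₁+1)*η/(B*C/2)^2 := by gcongr
          have e2 : |d - C|/(C/2)^2 ≤ (B*C+1)*η/(C/2)^2 := by gcongr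
          linarith
      _ = Ka * η := by rw [hKa]; ring
  have hafinK : |a - A| ≤ K * η :=
    le_trans hafin (mul_le_mul_of_nonneg_right (by rw [hK]; linarith) (le_of_lt hηpos))
  have hbfinK : |b - B*C| ≤ K * η :=
    le_trans hbfin (mul_le_mul_of_nonneg_right (by rw [hK]; linarith) (le_of_lt hηpos))
  constructor
  · rw [hZW]; simpa [Wblk, hp0] using hafinK
  · rw [hZW]; simpa [Wblk, hp0, ← hp] using hbfinK
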